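/- Let m, n ≥ 1 and let q ∈ 𝔽[X]^m with q ≠ 0. The number of vectors p ∈ 𝔽[X]^n for which there exists an m×n matrix A over L with ‖A‖_∞ < 1 and qA = p is exactly ‖q‖_∞^n (equivalently, it is the number of p ∈ 𝔽[X]^n with ‖p‖_∞ < ‖q‖_∞). -/

import Mathlib

open MeasureTheory Filter Asymptotics
open scoped Classical

/-- The absolute value on `L`, the field of formal Laurent series in `X⁻¹` over
the finite field `F` with `k = Fintype.card F` elements (here realised as
`LaurentSeries F` in the variable `t = X⁻¹`): `‖x‖ = k ^ (-order x)`, `‖0‖ = 0`. -/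
noncomputable def lnorm (F : Type*) [Field F] [Fintype F] (x : LaurentSeries F) : ℝ :=
  if x = 0 then 0 else (Fintype.card F : ℝ) ^ (-x.order)

/-- The embedding of the polynomial ring `F[X]` into `L`, sending `X` to the
Laurent series with a single term of order `-1` (the element of norm `k`). -/
noncomputable def polyToL (F : Type*) [Field F] [Fintype F] (p : Polynomial F) :
    LaurentSeries F :=
  Polynomial.aeval (HahnSeries.single (-1 : ℤ) (1 : F)) p

/-- Sup norm `‖·‖_∞` of a vector over `L`. -/
noncomputable def vnorm (F : Type*) [Field F] [Fintype F] {ι : Type*}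
    (v : ι → LaurentSeries F) : ℝ :=
  ⨆ i, lnorm F (v i)

/-- Sup norm `‖·‖_∞` of a vector of polynomials, viewed inside `L`. -/
noncomputable def pvnorm (F : Type*) [Field F] [Fintype F] {ι : Type*}
    (q : ι → Polynomial F) : ℝ :=
  vnorm F fun i => polyToL F (q i)

/-- The row vector `q A ∈ L^n`, for `q ∈ F[X]^m` and an `m × n` matrix `A` over `L`. -/
noncomputable def rowMul (F : Type*) [Field F] [Fintype F] {m n : ℕ}
    (q : Fin m → Polynomial F) (A : Fin m → Fin n → LaurentSeries F) :
    Fin n → LaurentSeries F :=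
  fun j => ∑ i, polyToL F (q i) * A i j

noncomputable instance (F : Type*) [Field F] [Fintype F] :
    MeasurableSpace (LaurentSeries F) := borel _

set_option linter.unusedSectionVars false

section Aux
variable {F : Type*} [Field F] [Fintype F]

lemma one_lt_cardF : (1 : ℝ) < (Fintype.card F : ℝ) := by
  exact_mod_cast Fintype.one_lt_card

lemma cardF_pos : (0 : ℝ) < (Fintype.card F : ℝ) := lt_trans one_pos one_lt_cardF

lemma algebraMap_LS (a : F) :
    algebraMap F (LaurentSeries F) a = HahnSeries.single (0:ℤ) a := by
  rw [HahnSeries.algebraMap_apply', ← PowerSeries.C_eq_algebraMap, HahnSeries.ofPowerSeries_C,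
    HahnSeries.C_apply]

lemma polyToL_eq_sum (p : Polynomial F) :
    polyToL F p = ∑ i ∈ p.support, HahnSeries.single (-(i : ℤ)) (p.coeff i) := by
  rw [polyToL, Polynomial.aeval_def, Polynomial.eval₂_eq_sum, Polynomial.sum]
  refine Finset.sum_congr rfl fun i _ => ?_
  rw [HahnSeries.single_pow, algebraMap_LS, HahnSeries.single_mul_single]
  simp

lemma polyToL_coeff (p : Polynomial F) (i : ℕ) :
    (polyToL F p).coeff (-(i:ℤ)) = p.coeff i := by
  rw [polyToL_eq_sum]
  rw [show ((∑ j ∈ p.support, HahnSeries.single (-(j : ℤ)) (p.coeff j)).coeff (-(i:ℤ)))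
      = HahnSeries.coeff.addMonoidHom (-(i:ℤ))
        (∑ j ∈ p.support, HahnSeries.single (-(j : ℤ)) (p.coeff j)) from rfl, map_sum]
  simp only [HahnSeries.coeff.addMonoidHom, AddMonoidHom.coe_mk, ZeroHom.coe_mk]
  by_cases hi : i ∈ p.support
  · rw [Finset.sum_eq_single i]
    · simp
    · intro b _ hb
      exact HahnSeries.coeff_single_of_ne (by simpa using fun h => hb h.symm)
    · exact fun h => absurd hi h
  · rw [Finset.sum_eq_zero, (Polynomial.notMem_support_iff).mp hi]
    intro b hb
    refine HahnSeries.coeff_single_of_ne fun h => ?_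
    have hib : i = b := by exact_mod_cast neg_injective h
    exact hi (hib ▸ hb)

lemma polyToL_zero : polyToL F (0 : Polynomial F) = 0 := by
  simp [polyToL]

lemma polyToL_ne_zero {p : Polynomial F} (hp : p ≠ 0) : polyToL F p ≠ 0 := by
  intro h
  have := polyToL_coeff p p.natDegree
  rw [h] at this
  simp only [HahnSeries.coeff_zero] at this
  exact Polynomial.leadingCoeff_ne_zero.mpr hp this.symm

lemma polyToL_coeff_ne_zero_imp {p : Polynomial F} {z : ℤ}
    (h : (polyToL F p).coeff z ≠ 0) : -(p.natDegree : ℤ) ≤ z := by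
  by_contra hz
  push_neg at hz
  have hz0 : z ≤ 0 := le_trans hz.le (by simp)
  have : z = -(((-z).toNat : ℕ) : ℤ) := by omega
  rw [this, polyToL_coeff] at h
  have : p.natDegree < (-z).toNat := by omega
  exact h (Polynomial.coeff_eq_zero_of_natDegree_lt this)

lemma polyToL_order {p : Polynomial F} (hp : p ≠ 0) :
    (polyToL F p).order = -(p.natDegree : ℤ) := by
  refine le_antisymm ?_ ?_
  · refine HahnSeries.order_le_of_coeff_ne_zero ?_
    rw [polyToL_coeff]
    exact Polynomial.leadingCoeff_ne_zero.mpr hp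
  · exact polyToL_coeff_ne_zero_imp
      (HahnSeries.coeff_order_eq_zero.not.mpr (polyToL_ne_zero hp))

lemma lnorm_nonneg (x : LaurentSeries F) : 0 ≤ lnorm F x := by
  rw [lnorm]; split_ifs
  · exact le_refl 0
  · positivity

lemma lnorm_zero : lnorm F (0 : LaurentSeries F) = 0 := by simp [lnorm]

lemma lnorm_pos {x : LaurentSeries F} (hx : x ≠ 0) : 0 < lnorm F x := by
  rw [lnorm, if_neg hx]
  exact zpow_pos cardF_pos _

lemma lnorm_one : lnorm F (1 : LaurentSeries F) = 1 := by
  rw [lnorm, if_neg one_ne_zero, HahnSeries.order_one]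
  simp

lemma lnorm_mul (x y : LaurentSeries F) : lnorm F (x * y) = lnorm F x * lnorm F y := by
  by_cases hx : x = 0
  · simp [hx, lnorm_zero]
  by_cases hy : y = 0
  · simp [hy, lnorm_zero]
  rw [lnorm, lnorm, lnorm, if_neg hx, if_neg hy, if_neg (mul_ne_zero hx hy),
    HahnSeries.order_mul hx hy, neg_add, zpow_add₀ (ne_of_gt cardF_pos)]

lemma lnorm_inv (x : LaurentSeries F) : lnorm F x⁻¹ = (lnorm F x)⁻¹ := by
  by_cases hx : x = 0
  · simp [hx, lnorm_zero]
  have h1 : lnorm F x * lnorm F x⁻¹ = 1 := by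
    rw [← lnorm_mul, mul_inv_cancel₀ hx, lnorm_one]
  exact ((inv_eq_of_mul_eq_one_right h1).symm)

lemma lnorm_add_le (x y : LaurentSeries F) :
    lnorm F (x + y) ≤ max (lnorm F x) (lnorm F y) := by
  by_cases hxy : x + y = 0
  · rw [hxy, lnorm_zero]
    exact le_max_of_le_left (lnorm_nonneg x)
  by_cases hx : x = 0
  · simp [hx]
  by_cases hy : y = 0
  · simp [hy]
  have hord := HahnSeries.min_order_le_order_add hxy (x := x) (y := y)
  rw [lnorm, lnorm, lnorm, if_neg hx, if_neg hy, if_neg hxy]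
  rcases min_le_iff.mp hord with h | h
  · refine le_max_of_le_left ?_
    exact (zpow_le_zpow_iff_right₀ one_lt_cardF).mpr (by omega)
  · refine le_max_of_le_right ?_
    exact (zpow_le_zpow_iff_right₀ one_lt_cardF).mpr (by omega)

lemma lnorm_sum_le {ι : Type*} (s : Finset ι) (f : ι → LaurentSeries F) {B : ℝ}
    (hB : 0 ≤ B) (h : ∀ i ∈ s, lnorm F (f i) ≤ B) :
    lnorm F (∑ i ∈ s, f i) ≤ B := by
  induction s using Finset.induction_on with
  | empty => simpa [lnorm_zero] using hB
  | @insert a s' hx ih =>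
    rw [Finset.sum_insert hx]
    refine le_trans (lnorm_add_le _ _) (max_le (h a (Finset.mem_insert_self a s')) ?_)
    exact ih fun i hi => h i (Finset.mem_insert_of_mem hi)

lemma lnorm_le_of_lt_one {x : LaurentSeries F} (h : lnorm F x < 1) :
    lnorm F x ≤ ((Fintype.card F : ℝ))⁻¹ := by
  by_cases hx : x = 0
  · rw [hx, lnorm_zero]
    positivity
  rw [lnorm, if_neg hx] at h ⊢
  have h0 : ((Fintype.card F : ℝ)) ^ (-x.order) < (Fintype.card F : ℝ) ^ (0:ℤ) := by
    simpa using h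
  have := (zpow_lt_zpow_iff_right₀ one_lt_cardF).mp h0
  rw [← zpow_neg_one]
  exact (zpow_le_zpow_iff_right₀ one_lt_cardF).mpr (by omega)

section vnorm
variable {ι : Type*} [Fintype ι] [Nonempty ι]

lemma le_vnorm (v : ι → LaurentSeries F) (i : ι) : lnorm F (v i) ≤ vnorm F v :=
  le_ciSup (f := fun i => lnorm F (v i)) (Set.Finite.bddAbove (Set.finite_range _)) i

lemma vnorm_def (v : ι → LaurentSeries F) : vnorm F v = ⨆ i, lnorm F (v i) := rfl

lemma vnorm_le {v : ι → LaurentSeries F} {B : ℝ} (h : ∀ i, lnorm F (v i) ≤ B) :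
    vnorm F v ≤ B := ciSup_le h

lemma vnorm_attained (v : ι → LaurentSeries F) :
    ∃ i, vnorm F v = lnorm F (v i) := by
  obtain ⟨i, hi⟩ := Finite.exists_max (fun i => lnorm F (v i))
  exact ⟨i, le_antisymm (vnorm_le hi) (le_vnorm v i)⟩

lemma vnorm_lt_iff {v : ι → LaurentSeries F} {B : ℝ} :
    vnorm F v < B ↔ ∀ i, lnorm F (v i) < B := by
  constructor
  · exact fun h i => lt_of_le_of_lt (le_vnorm v i) h
  · intro h
    obtain ⟨i, hi⟩ := vnorm_attained v
    rw [hi]; exact h i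

end vnorm

lemma lnorm_polyToL {p : Polynomial F} (hp : p ≠ 0) :
    lnorm F (polyToL F p) = (Fintype.card F : ℝ) ^ (p.natDegree : ℤ) := by
  rw [lnorm, if_neg (polyToL_ne_zero hp), polyToL_order hp, neg_neg]

end Aux

/-- For `m, n ≥ 1` and nonzero `q ∈ F[X]^m`, the number of vectors
`p ∈ F[X]^n` for which there is an `m × n` matrix `A` over `L` with
`‖A‖_∞ < 1` and `q A = p` is exactly `‖q‖_∞ ^ n`; equivalently, it equals the
number of `p ∈ F[X]^n` with `‖p‖_∞ < ‖q‖_∞`. -/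
theorem card_solution_vectors
    {F : Type*} [Field F] [Fintype F]
    (m n : ℕ) (hm : 1 ≤ m) (hn : 1 ≤ n)
    (q : Fin m → Polynomial F) (hq : q ≠ 0) :
    (Nat.card {p : Fin n → Polynomial F //
        ∃ A : Fin m → Fin n → LaurentSeries F,
          (∀ i j, lnorm F (A i j) < 1) ∧
            ∀ j, rowMul F q A j = polyToL F (p j)} : ℝ) = pvnorm F q ^ n ∧
      Nat.card {p : Fin n → Polynomial F //
        ∃ A : Fin m → Fin n → LaurentSeries F,
          (∀ i j, lnorm F (A i j) < 1) ∧
            ∀ j, rowMul F q A j = polyToL F (p j)} =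
        Nat.card {p : Fin n → Polynomial F // pvnorm F p < pvnorm F q} := by
  haveI : NeZero m := ⟨by omega⟩
  haveI : NeZero n := ⟨by omega⟩
  obtain ⟨i1, hi1⟩ : ∃ i, q i ≠ 0 := by
    by_contra h; push_neg at h; exact hq (funext h)
  obtain ⟨i0, hi0⟩ := vnorm_attained (fun i => polyToL F (q i))
  have hi0' : pvnorm F q = lnorm F (polyToL F (q i0)) := hi0
  have hqi0 : q i0 ≠ 0 := by
    intro h
    have h1 : (0:ℝ) < lnorm F (polyToL F (q i1)) := lnorm_pos (polyToL_ne_zero hi1)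
    have h2 := le_vnorm (fun i => polyToL F (q i)) i1
    rw [hi0, h, polyToL_zero, lnorm_zero] at h2
    exact absurd (lt_of_lt_of_le h1 h2) (lt_irrefl 0)
  set D := (q i0).natDegree with hD
  have hpv : pvnorm F q = (Fintype.card F : ℝ) ^ (D:ℤ) := by
    rw [hi0', lnorm_polyToL hqi0]
  have hpvpos : 0 < pvnorm F q := hpv ▸ zpow_pos cardF_pos _
  -- main equivalence
  have key : ∀ p : Fin n → Polynomial F,
      (∃ A : Fin m → Fin n → LaurentSeries F, (∀ i j, lnorm F (A i j) < 1) ∧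
          ∀ j, rowMul F q A j = polyToL F (p j)) ↔
      (∀ j, lnorm F (polyToL F (p j)) < pvnorm F q) := by
    intro p
    constructor
    · rintro ⟨A, hA, hrow⟩ j
      rw [← hrow j, rowMul]
      have step : lnorm F (∑ i, polyToL F (q i) * A i j)
          ≤ pvnorm F q * (Fintype.card F : ℝ)⁻¹ := by
        refine lnorm_sum_le _ _ (by positivity) fun i _ => ?_
        rw [lnorm_mul]
        exact mul_le_mul (le_vnorm (fun i => polyToL F (q i)) i)
          (lnorm_le_of_lt_one (hA i j)) (lnorm_nonneg _) (le_of_lt hpvpos)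
      refine lt_of_le_of_lt step ?_
      have : (Fintype.card F : ℝ)⁻¹ < 1 := inv_lt_one_of_one_lt₀ one_lt_cardF
      nlinarith
    · intro hp
      refine ⟨fun i j => if i = i0 then polyToL F (p j) * (polyToL F (q i0))⁻¹ else 0,
        fun i j => ?_, fun j => ?_⟩
      · dsimp only
        by_cases hi : i = i0
        · rw [if_pos hi, lnorm_mul, lnorm_inv, ← div_eq_mul_inv, div_lt_one
            (lnorm_pos (polyToL_ne_zero hqi0))]
          rw [← hi0']
          exact hp j
        · rw [if_neg hi, lnorm_zero]; exact one_pos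
      · rw [rowMul]
        rw [Finset.sum_eq_single i0]
        · rw [if_pos rfl, mul_comm (polyToL F (p j)) _, ← mul_assoc,
            mul_inv_cancel₀ (polyToL_ne_zero hqi0), one_mul]
        · intro b _ hb; rw [if_neg hb, mul_zero]
        · intro h; exact absurd (Finset.mem_univ i0) h
  have key2 : ∀ p : Fin n → Polynomial F,
      (∀ j, lnorm F (polyToL F (p j)) < pvnorm F q) ↔ pvnorm F p < pvnorm F q :=
    fun p => vnorm_lt_iff.symm
  have key3 : ∀ p : Fin n → Polynomial F,
      (∀ j, lnorm F (polyToL F (p j)) < pvnorm F q) ↔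
        ∀ j, p j ∈ Polynomial.degreeLT F D := by
    intro p
    refine forall_congr' fun j => ?_
    rw [Polynomial.mem_degreeLT, hpv]
    by_cases hp : p j = 0
    · simp only [hp, polyToL_zero, lnorm_zero, Polynomial.degree_zero]
      constructor
      · intro _; exact WithBot.bot_lt_coe _
      · intro _; exact zpow_pos cardF_pos _
    · rw [lnorm_polyToL hp, zpow_lt_zpow_iff_right₀ one_lt_cardF, Nat.cast_lt,
        Polynomial.natDegree_lt_iff_degree_lt hp]
  -- counting
  have hcard : Nat.card {p : Fin n → Polynomial F // ∀ j, p j ∈ Polynomial.degreeLT F D}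
      = (Fintype.card F ^ D) ^ n := by
    have e : {p : Fin n → Polynomial F // ∀ j, p j ∈ Polynomial.degreeLT F D}
        ≃ (Fin n → Fin D → F) :=
      (Equiv.subtypePiEquivPi).trans
        (Equiv.piCongrRight fun _ => (Polynomial.degreeLTEquiv F D).toEquiv)
    rw [Nat.card_congr e, Nat.card_eq_fintype_card]
    simp [Fintype.card_fun]
  have hmain : Nat.card {p : Fin n → Polynomial F //
      ∃ A : Fin m → Fin n → LaurentSeries F, (∀ i j, lnorm F (A i j) < 1) ∧
        ∀ j, rowMul F q A j = polyToL F (p j)} = (Fintype.card F ^ D) ^ n := by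
    rw [Nat.card_congr (Equiv.subtypeEquivRight fun p => (key p).trans (key3 p))]
    exact hcard
  constructor
  · rw [hmain, hpv]
    push_cast
    rw [← zpow_natCast ((Fintype.card F : ℝ)) D]
  · have h2 : Nat.card {p : Fin n → Polynomial F // pvnorm F p < pvnorm F q}
        = (Fintype.card F ^ D) ^ n := by
      rw [Nat.card_congr (Equiv.subtypeEquivRight fun p => ((key2 p).symm.trans (key3 p)))]
      exact hcard
    rw [hmain, h2]
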